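/- Let F be a Borel probability measure on ℝ^d with E_F‖ξ‖₂² < ∞, and let ξ¹, ξ², … be i.i.d. draws from F. Let μ̂_N = (1/N)Σ_{i=1}^N ξ^i and Σ̂_N = (1/N)Σ_{i=1}^N (ξ^i − μ̂_N)(ξ^i − μ̂_N)ᵀ. Let γ_{1,N} ↓ 0 and γ_{2,N} ↓ 0 be positive sequences, and define 𝓕_N = { G Borel probability measure on ℝ^d with finite second moments : ‖E_G[ξ] − μ̂_N‖₂ ≤ γ_{1,N} and ‖E_G[(ξ − E_G ξ)(ξ − E_G ξ)ᵀ] − Σ̂_N‖_Frobenius ≤ γ_{2,N} }. Let c(x;ξ) = c₀(x) + Σ_{i=1}^d c_i(x) ξ_i + Σ_{i=1}^d Σ_{j=1}^i c_{ij}(x) ξ_i ξ_j for arbitrary functions c₀, c_i, c_{ij} : X → ℝ. Then almost surely: every sequence (G_N) of probability measures with G_N ∈ 𝓕_N for all but finitely many N satisfies E_{G_N}[c(x;ξ)] → E_F[c(x;ξ)] for every x ∈ X; i.e., the test with these moment-based confidence regions is c-consistent for F. -/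

import Mathlib

open MeasureTheory Filter Topology
open scoped ENNReal

/-- The `k`-th coordinate of the mean vector of a measure on `ℝ^d`. -/
noncomputable def meanCoord {d : ℕ} (G : Measure (EuclideanSpace ℝ (Fin d)))
    (k : Fin d) : ℝ :=
  ∫ ξv, ξv k ∂G

/-- The `(k,l)` entry of the covariance matrix of a measure on `ℝ^d`. -/
noncomputable def covEntry {d : ℕ} (G : Measure (EuclideanSpace ℝ (Fin d)))
    (k l : Fin d) : ℝ :=
  ∫ ξv, (ξv k - meanCoord G k) * (ξv l - meanCoord G l) ∂G

section Helpers
open MeasureTheory Filter Topology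
variable {d : ℕ}

lemma coord_sq_le (ξv : EuclideanSpace ℝ (Fin d)) (k : Fin d) : (ξv k)^2 ≤ ‖ξv‖^2 := by
  rw [EuclideanSpace.norm_eq, Real.sq_sqrt (by positivity)]
  exact Finset.single_le_sum (f := fun i => ‖ξv i‖^2) (fun i _ => by positivity)
    (Finset.mem_univ k) |>.trans_eq' (by simp [sq_abs])

lemma integrable_coord {G : Measure (EuclideanSpace ℝ (Fin d))} [IsProbabilityMeasure G]
    (h2 : Integrable (fun ξv => ‖ξv‖^2) G) (k : Fin d) :
    Integrable (fun ξv => ξv k) G := by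
  have hb : Integrable (fun ξv : EuclideanSpace ℝ (Fin d) => (1:ℝ) + ‖ξv‖^2) G :=
    (integrable_const 1).add h2
  refine hb.mono ?_ ?_
  · exact ((EuclideanSpace.proj k).continuous.measurable).aestronglyMeasurable
  · filter_upwards with ξv
    have h1 := coord_sq_le ξv k
    have h2' : (0:ℝ) ≤ ‖ξv‖^2 := by positivity
    simp only [Real.norm_eq_abs]
    rw [abs_of_nonneg (by positivity : (0:ℝ) ≤ 1 + ‖ξv‖^2)]
    nlinarith [sq_abs (ξv k), abs_nonneg (ξv k), sq_nonneg (|ξv k| - 1)]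

lemma integrable_coord_mul {G : Measure (EuclideanSpace ℝ (Fin d))}
    (h2 : Integrable (fun ξv => ‖ξv‖^2) G) (k l : Fin d) :
    Integrable (fun ξv => ξv k * ξv l) G := by
  refine h2.mono ?_ ?_
  · exact (((EuclideanSpace.proj k).continuous.measurable).mul
      ((EuclideanSpace.proj l).continuous.measurable)).aestronglyMeasurable
  · filter_upwards with ξv
    have h1 := coord_sq_le ξv k
    have h1' := coord_sq_le ξv l
    simp only [Real.norm_eq_abs, abs_mul]
    rw [abs_of_nonneg (by positivity : (0:ℝ) ≤ ‖ξv‖^2)]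
    nlinarith [sq_abs (ξv k), sq_abs (ξv l), abs_nonneg (ξv k), abs_nonneg (ξv l),
      sq_nonneg (|ξv k| - |ξv l|)]

lemma covEntry_add_mul {G : Measure (EuclideanSpace ℝ (Fin d))} [IsProbabilityMeasure G]
    (h2 : Integrable (fun ξv => ‖ξv‖^2) G) (k l : Fin d) :
    covEntry G k l + meanCoord G k * meanCoord G l = ∫ ξv, ξv k * ξv l ∂G := by
  set mk := meanCoord G k with hmk
  set ml := meanCoord G l with hml
  have hik : Integrable (fun ξv : EuclideanSpace ℝ (Fin d) => ξv k) G := integrable_coord h2 k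
  have hil : Integrable (fun ξv : EuclideanSpace ℝ (Fin d) => ξv l) G := integrable_coord h2 l
  have hikl : Integrable (fun ξv : EuclideanSpace ℝ (Fin d) => ξv k * ξv l) G :=
    integrable_coord_mul h2 k l
  have h1 : Integrable (fun ξv : EuclideanSpace ℝ (Fin d) => ξv k * ξv l - mk * ξv l) G :=
    hikl.sub (hil.const_mul mk)
  have h2' : Integrable (fun ξv : EuclideanSpace ℝ (Fin d) =>
      (ξv k * ξv l - mk * ξv l) - ml * ξv k) G := h1.sub (hik.const_mul ml)
  have key : covEntry G k l
      = (∫ ξv, ξv k * ξv l ∂G) - mk * (∫ ξv, ξv l ∂G) - ml * (∫ ξv, ξv k ∂G)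
        + mk * ml := by
    rw [covEntry]
    have heq : (fun ξv : EuclideanSpace ℝ (Fin d) => (ξv k - mk) * (ξv l - ml))
        = fun ξv => ((ξv k * ξv l - mk * ξv l) - ml * ξv k) + mk * ml := by
      funext ξv; ring
    rw [heq, integral_add h2' (integrable_const _), integral_sub h1 (hik.const_mul ml),
      integral_sub hikl (hil.const_mul mk), integral_const_mul, integral_const_mul,
      integral_const]
    simp
  have e1 : (∫ ξv, ξv k ∂G) = mk := rfl
  have e2 : (∫ ξv, ξv l ∂G) = ml := rfl
  rw [key, e1, e2]; ring

lemma integral_cost {G : Measure (EuclideanSpace ℝ (Fin d))} [IsProbabilityMeasure G]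
    (h2 : Integrable (fun ξv => ‖ξv‖^2) G) (a : ℝ) (b : Fin d → ℝ) (C : Fin d → Fin d → ℝ) :
    ∫ ξv, (a + ∑ i, b i * ξv i + ∑ i, ∑ j ∈ Finset.Iic i, C i j * ξv i * ξv j) ∂G
    = a + ∑ i, b i * meanCoord G i
      + ∑ i, ∑ j ∈ Finset.Iic i, C i j * (covEntry G i j + meanCoord G i * meanCoord G j) := by
  have hlin : Integrable (fun ξv : EuclideanSpace ℝ (Fin d) => ∑ i, b i * ξv i) G :=
    integrable_finset_sum _ (fun i _ => (integrable_coord h2 i).const_mul (b i))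
  have hq1 : ∀ i j : Fin d,
      Integrable (fun ξv : EuclideanSpace ℝ (Fin d) => C i j * ξv i * ξv j) G := by
    intro i j
    simpa [mul_assoc] using (integrable_coord_mul h2 i j).const_mul (C i j)
  have hquad : Integrable (fun ξv : EuclideanSpace ℝ (Fin d) =>
      ∑ i, ∑ j ∈ Finset.Iic i, C i j * ξv i * ξv j) G :=
    integrable_finset_sum _ (fun i _ => integrable_finset_sum _ (fun j _ => hq1 i j))
  have h01 : Integrable (fun ξv : EuclideanSpace ℝ (Fin d) => a + ∑ i, b i * ξv i) G :=
    (integrable_const a).add hlin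
  rw [integral_add h01 hquad, integral_add (integrable_const a) hlin, integral_const]
  simp only [measure_univ, probReal_univ, ENNReal.toReal_one, smul_eq_mul, one_mul]
  congr 1
  · congr 1
    rw [integral_finset_sum _ (fun i _ => (integrable_coord h2 i).const_mul (b i))]
    exact Finset.sum_congr rfl (fun i _ => by rw [integral_const_mul]; rfl)
  · rw [integral_finset_sum _ (fun i _ => integrable_finset_sum _ (fun j _ => hq1 i j))]
    refine Finset.sum_congr rfl (fun i _ => ?_)
    rw [integral_finset_sum _ (fun j _ => hq1 i j)]
    refine Finset.sum_congr rfl (fun j _ => ?_)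
    rw [covEntry_add_mul h2]
    rw [show (fun ξv : EuclideanSpace ℝ (Fin d) => C i j * ξv i * ξv j)
      = fun ξv => C i j * (ξv i * ξv j) from funext fun _ => by ring, integral_const_mul]

lemma slln_comp {Ω : Type*} [MeasurableSpace Ω] (P : Measure Ω) [IsProbabilityMeasure P]
    (F : Measure (EuclideanSpace ℝ (Fin d))) [IsProbabilityMeasure F]
    (ξ : ℕ → Ω → EuclideanSpace ℝ (Fin d)) (hξmeas : ∀ i, Measurable (ξ i))
    (hiid : ProbabilityTheory.iIndepFun ξ P)
    (hdist : ∀ i, Measure.map (ξ i) P = F)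
    (f : EuclideanSpace ℝ (Fin d) → ℝ) (hf : Measurable f) (hfi : Integrable f F) :
    ∀ᵐ ω ∂P, Tendsto (fun N => (∑ i ∈ Finset.range N, f (ξ i ω)) / N) atTop
      (𝓝 (∫ x, f x ∂F)) := by
  have hint : Integrable (fun ω => f (ξ 0 ω)) P := by
    rw [← hdist 0] at hfi
    exact (integrable_map_measure hf.aestronglyMeasurable (hξmeas 0).aemeasurable).mp hfi
  have hindep : Pairwise (Function.onFun (ProbabilityTheory.IndepFun · · P) fun i ω => f (ξ i ω)) :=
    fun i j hij => (hiid.indepFun hij).comp hf hf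
  have hident : ∀ i, ProbabilityTheory.IdentDistrib (fun ω => f (ξ i ω))
      (fun ω => f (ξ 0 ω)) P P := by
    intro i
    refine ⟨(hf.comp (hξmeas i)).aemeasurable, (hf.comp (hξmeas 0)).aemeasurable, ?_⟩
    calc Measure.map (fun ω => f (ξ i ω)) P = Measure.map f (Measure.map (ξ i) P) := by
          rw [Measure.map_map hf (hξmeas i)]; rfl
      _ = Measure.map f (Measure.map (ξ 0) P) := by rw [hdist i, hdist 0]
      _ = Measure.map (fun ω => f (ξ 0 ω)) P := by rw [Measure.map_map hf (hξmeas 0)]; rfl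
  have h := ProbabilityTheory.strong_law_ae_real (fun i ω => f (ξ i ω)) hint hindep hident
  have he : (∫ ω, f (ξ 0 ω) ∂P) = ∫ x, f x ∂F := by
    rw [← hdist 0, integral_map (hξmeas 0).aemeasurable hf.aestronglyMeasurable]
  rw [he] at h
  exact h

lemma emp_cov_eq (N : ℕ) (hN : N ≠ 0) (a b : ℕ → ℝ) :
    (∑ i ∈ Finset.range N, (a i - (∑ i' ∈ Finset.range N, a i') / N) *
        (b i - (∑ i' ∈ Finset.range N, b i') / N)) / N
    = (∑ i ∈ Finset.range N, a i * b i) / N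
      - ((∑ i ∈ Finset.range N, a i) / N) * ((∑ i ∈ Finset.range N, b i) / N) := by
  have hN' : (N : ℝ) ≠ 0 := Nat.cast_ne_zero.mpr hN
  set A := (∑ i' ∈ Finset.range N, a i') / N with hA
  set B := (∑ i' ∈ Finset.range N, b i') / N with hB
  have hexp : ∀ i, (a i - A) * (b i - B) = a i * b i - A * b i - B * a i + A * B :=
    fun i => by ring
  rw [Finset.sum_congr rfl (fun i _ => hexp i), Finset.sum_add_distrib,
    Finset.sum_sub_distrib, Finset.sum_sub_distrib, ← Finset.mul_sum, ← Finset.mul_sum,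
    Finset.sum_const, Finset.card_range, nsmul_eq_mul]
  have ha : A * N = ∑ i' ∈ Finset.range N, a i' := by rw [hA]; field_simp
  have hb : B * N = ∑ i' ∈ Finset.range N, b i' := by rw [hB]; field_simp
  rw [← ha, ← hb]
  field_simp
  ring

end Helpers

/-- the moment-based confidence regions of
Calafiore–El Ghaoui / Delage–Ye type are c-consistent for costs that are quadratic in
`ξ`.  Let `F` have finite second moment, `μ̂_N` and `Σ̂_N` be the empirical mean and
covariance of the i.i.d. data, `γ_{1,N} ↓ 0`, `γ_{2,N} ↓ 0` be positive thresholds, and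
`𝓕_N` consist of the distributions whose mean is within `γ_{1,N}` (in Euclidean norm) of
`μ̂_N` and whose covariance matrix is within `γ_{2,N}` (in Frobenius norm) of `Σ̂_N`.
Then for every cost `c(x;ξ) = c₀(x) + ∑_i c_i(x) ξ_i + ∑_i ∑_{j≤i} c_{ij}(x) ξ_i ξ_j`,
almost surely every sequence `(G_N)` with `G_N ∈ 𝓕_N` for all but finitely many `N`
satisfies `E_{G_N}[c(x;ξ)] → E_F[c(x;ξ)]` for every decision `x`. -/
theorem stmt16 {d : ℕ} {V : Type*} {Ω : Type*} [MeasurableSpace Ω]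
    (P : Measure Ω) [IsProbabilityMeasure P]
    (F : Measure (EuclideanSpace ℝ (Fin d))) [IsProbabilityMeasure F]
    (hF2 : Integrable (fun ξv => ‖ξv‖^2) F)
    -- i.i.d. data drawn from `F`
    (ξ : ℕ → Ω → EuclideanSpace ℝ (Fin d)) (hξmeas : ∀ i, Measurable (ξ i))
    (hiid : ProbabilityTheory.iIndepFun ξ P)
    (hdist : ∀ i, Measure.map (ξ i) P = F)
    -- thresholds: positive, decreasing to zero
    (γ₁ γ₂ : ℕ → ℝ)
    (hγ₁pos : ∀ N, 0 < γ₁ N) (hγ₁anti : Antitone γ₁) (hγ₁0 : Tendsto γ₁ atTop (𝓝 0))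
    (hγ₂pos : ∀ N, 0 < γ₂ N) (hγ₂anti : Antitone γ₂) (hγ₂0 : Tendsto γ₂ atTop (𝓝 0))
    -- the quadratic cost
    (c₀ : V → ℝ) (c₁ : Fin d → V → ℝ) (c₂ : Fin d → Fin d → V → ℝ) :
    ∀ᵐ ω ∂P, ∀ G : ℕ → Measure (EuclideanSpace ℝ (Fin d)),
      (∀ᶠ N in atTop,
        IsProbabilityMeasure (G N) ∧ Integrable (fun ξv => ‖ξv‖^2) (G N) ∧
        -- mean within `γ₁ N` of the empirical mean (Euclidean norm)
        Real.sqrt (∑ k, (meanCoord (G N) k -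
            (∑ i ∈ Finset.range N, ξ i ω k) / N)^2) ≤ γ₁ N ∧
        -- covariance within `γ₂ N` of the empirical covariance (Frobenius norm)
        Real.sqrt (∑ k, ∑ l, (covEntry (G N) k l -
            (∑ i ∈ Finset.range N,
              (ξ i ω k - (∑ i' ∈ Finset.range N, ξ i' ω k) / N) *
                (ξ i ω l - (∑ i' ∈ Finset.range N, ξ i' ω l) / N)) / N)^2) ≤ γ₂ N) →
      ∀ x : V,
        Tendsto (fun N => ∫ ξv,
            (c₀ x + ∑ i, c₁ i x * ξv i +
              ∑ i, ∑ j ∈ Finset.Iic i, c₂ i j x * ξv i * ξv j) ∂(G N)) atTop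
          (𝓝 (∫ ξv,
            (c₀ x + ∑ i, c₁ i x * ξv i +
              ∑ i, ∑ j ∈ Finset.Iic i, c₂ i j x * ξv i * ξv j) ∂F)) := by
  have hproj : ∀ k : Fin d, Measurable fun ξv : EuclideanSpace ℝ (Fin d) => ξv k :=
    fun k => (EuclideanSpace.proj k).continuous.measurable
  have hmeanAE : ∀ᵐ ω ∂P, ∀ k, Tendsto (fun N => (∑ i ∈ Finset.range N, ξ i ω k) / N)
      atTop (𝓝 (meanCoord F k)) := by
    rw [ae_all_iff]; intro k
    exact slln_comp P F ξ hξmeas hiid hdist _ (hproj k) (integrable_coord hF2 k)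
  have hprodAE : ∀ᵐ ω ∂P, ∀ k l, Tendsto
      (fun N => (∑ i ∈ Finset.range N, ξ i ω k * ξ i ω l) / N)
      atTop (𝓝 (∫ ξv, ξv k * ξv l ∂F)) := by
    rw [ae_all_iff]; intro k; rw [ae_all_iff]; intro l
    exact slln_comp P F ξ hξmeas hiid hdist _ ((hproj k).mul (hproj l))
      (integrable_coord_mul hF2 k l)
  filter_upwards [hmeanAE, hprodAE] with ω hμ hprod
  intro G hG x
  -- convergence of the empirical covariance
  have hSig : ∀ k l, Tendsto (fun N => (∑ i ∈ Finset.range N,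
      (ξ i ω k - (∑ i' ∈ Finset.range N, ξ i' ω k) / N) *
        (ξ i ω l - (∑ i' ∈ Finset.range N, ξ i' ω l) / N)) / N)
      atTop (𝓝 (covEntry F k l)) := by
    intro k l
    have h1 : Tendsto (fun N => (∑ i ∈ Finset.range N, ξ i ω k * ξ i ω l) / N
        - ((∑ i ∈ Finset.range N, ξ i ω k) / N) * ((∑ i ∈ Finset.range N, ξ i ω l) / N))
        atTop (𝓝 ((∫ ξv, ξv k * ξv l ∂F) - meanCoord F k * meanCoord F l)) :=
      (hprod k l).sub ((hμ k).mul (hμ l))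
    have h2 : covEntry F k l = (∫ ξv, ξv k * ξv l ∂F) - meanCoord F k * meanCoord F l := by
      have := covEntry_add_mul hF2 k l; linarith
    rw [h2]
    refine Filter.Tendsto.congr' ?_ h1
    filter_upwards [eventually_ge_atTop 1] with N hN
    exact (emp_cov_eq N (by omega) (fun i => ξ i ω k) (fun i => ξ i ω l)).symm
  -- convergence of the means of G N
  have hGm : ∀ k, Tendsto (fun N => meanCoord (G N) k) atTop (𝓝 (meanCoord F k)) := by
    intro k
    have hd : Tendsto (fun N => meanCoord (G N) k - (∑ i ∈ Finset.range N, ξ i ω k) / N)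
        atTop (𝓝 0) := by
      apply squeeze_zero_norm' (a := γ₁) ?_ hγ₁0
      filter_upwards [hG] with N hN
      refine le_trans ?_ hN.2.2.1
      rw [Real.norm_eq_abs, ← Real.sqrt_sq_eq_abs]
      exact Real.sqrt_le_sqrt (Finset.single_le_sum
        (f := fun k' => (meanCoord (G N) k' - (∑ i ∈ Finset.range N, ξ i ω k') / N)^2)
        (fun _ _ => sq_nonneg _) (Finset.mem_univ k))
    simpa using hd.add (hμ k)
  -- convergence of the covariances of G N
  have hGc : ∀ k l, Tendsto (fun N => covEntry (G N) k l) atTop (𝓝 (covEntry F k l)) := by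
    intro k l
    have hd : Tendsto (fun N => covEntry (G N) k l - (∑ i ∈ Finset.range N,
        (ξ i ω k - (∑ i' ∈ Finset.range N, ξ i' ω k) / N) *
          (ξ i ω l - (∑ i' ∈ Finset.range N, ξ i' ω l) / N)) / N) atTop (𝓝 0) := by
      apply squeeze_zero_norm' (a := γ₂) ?_ hγ₂0
      filter_upwards [hG] with N hN
      refine le_trans ?_ hN.2.2.2
      rw [Real.norm_eq_abs, ← Real.sqrt_sq_eq_abs]
      apply Real.sqrt_le_sqrt
      calc (covEntry (G N) k l - (∑ i ∈ Finset.range N,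
          (ξ i ω k - (∑ i' ∈ Finset.range N, ξ i' ω k) / N) *
            (ξ i ω l - (∑ i' ∈ Finset.range N, ξ i' ω l) / N)) / N)^2
          ≤ ∑ l', (covEntry (G N) k l' - (∑ i ∈ Finset.range N,
            (ξ i ω k - (∑ i' ∈ Finset.range N, ξ i' ω k) / N) *
              (ξ i ω l' - (∑ i' ∈ Finset.range N, ξ i' ω l') / N)) / N)^2 :=
          Finset.single_le_sum
            (f := fun l' => (covEntry (G N) k l' - (∑ i ∈ Finset.range N,
              (ξ i ω k - (∑ i' ∈ Finset.range N, ξ i' ω k) / N) *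
                (ξ i ω l' - (∑ i' ∈ Finset.range N, ξ i' ω l') / N)) / N)^2)
            (fun _ _ => sq_nonneg _) (Finset.mem_univ l)
        _ ≤ _ := Finset.single_le_sum
            (f := fun k' => ∑ l', (covEntry (G N) k' l' - (∑ i ∈ Finset.range N,
              (ξ i ω k' - (∑ i' ∈ Finset.range N, ξ i' ω k') / N) *
                (ξ i ω l' - (∑ i' ∈ Finset.range N, ξ i' ω l') / N)) / N)^2)
            (fun _ _ => Finset.sum_nonneg fun _ _ => sq_nonneg _) (Finset.mem_univ k)
    simpa using hd.add (hSig k l)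
  -- convergence of the moment expression
  have hfin : Tendsto (fun N => c₀ x + ∑ i, c₁ i x * meanCoord (G N) i
      + ∑ i, ∑ j ∈ Finset.Iic i, c₂ i j x *
        (covEntry (G N) i j + meanCoord (G N) i * meanCoord (G N) j))
      atTop (𝓝 (c₀ x + ∑ i, c₁ i x * meanCoord F i
      + ∑ i, ∑ j ∈ Finset.Iic i, c₂ i j x *
        (covEntry F i j + meanCoord F i * meanCoord F j))) :=
    (tendsto_const_nhds.add (tendsto_finset_sum _ fun i _ =>
        tendsto_const_nhds.mul (hGm i))).add
      (tendsto_finset_sum _ fun i _ => tendsto_finset_sum _ fun j _ =>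
        tendsto_const_nhds.mul ((hGc i j).add ((hGm i).mul (hGm j))))
  rw [integral_cost hF2 (c₀ x) (fun i => c₁ i x) (fun i j => c₂ i j x)]
  refine Filter.Tendsto.congr' ?_ hfin
  filter_upwards [hG] with N hN
  haveI := hN.1
  exact (integral_cost hN.2.1 (c₀ x) (fun i => c₁ i x) (fun i j => c₂ i j x)).symm
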